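/- Let a₁, a₂, a₃, a₄, a₅ ∈ ℝ with a₃ > 0, f(x,y) = a₁ + a₂|y|^{4/3} − a₃x³, g(x,y) = a₄|x|^{3/2} + a₅y, a₆ = sup_{u≥0}(8u^{2/3} − 0.5a₃u²), a₈ = sup_{u≥0}(9a₄²u − 0.25a₃u²), H₂ = max(a₆, a₂²) + 2·max(a₈, a₅²), and U(x,x̄) = 0.25a₃|x−x̄|²(x² + x̄²). Then for all x, x̄, y, ȳ ∈ ℝ: (x−x̄)(f(x,y) − f(x̄,ȳ)) + (g(x,y) − g(x̄,ȳ))² ≤ H₂(|x−x̄|² + |y−ȳ|²) − U(x,x̄) + U(y,ȳ). -/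
import Mathlib

lemma key4' (p q N : ℝ) (hq : 0 ≤ q) (hpq : q ≤ p) (hN : p ≤ N) :
    9*(p^4 - q^4)^2 ≤ 16*N^2*(p^3 - q^3)^2 := by
  have hp : 0 ≤ p := le_trans hq hpq
  have hc : q^3 ≤ p^3 := pow_le_pow_left₀ hq hpq 3
  have hc4 : q^4 ≤ p^4 := pow_le_pow_left₀ hq hpq 4
  have e1 : 0 ≤ (p-q)^2 * (p^2 + 2*p*q + 3*q^2) :=
    mul_nonneg (sq_nonneg _) (by nlinarith [sq_nonneg (p+q), sq_nonneg q])
  have e2 : 0 ≤ (N - p) * (p^3 - q^3) := mul_nonneg (by linarith) (by linarith)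
  have h1 : 3*(p^4 - q^4) ≤ 4*N*(p^3 - q^3) := by nlinarith [e1, e2]
  have h0 : 0 ≤ 3*(p^4 - q^4) := by linarith
  nlinarith [mul_self_le_mul_self h0 h1]

lemma key3' (r s M : ℝ) (hs : 0 ≤ s) (hrs : s ≤ r) (hM : r ≤ M) :
    4*(r^3 - s^3)^2 ≤ 9*M^2*(r^2 - s^2)^2 := by
  have hr : 0 ≤ r := le_trans hs hrs
  have hc : s^3 ≤ r^3 := pow_le_pow_left₀ hs hrs 3
  have hc2 : s^2 ≤ r^2 := pow_le_pow_left₀ hs hrs 2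
  have e1 : 0 ≤ (r-s)^2 * (r + 2*s) := mul_nonneg (sq_nonneg _) (by linarith)
  have e2 : 0 ≤ (M - r) * (r^2 - s^2) := mul_nonneg (by linarith) (by linarith)
  have h1 : 2*(r^3 - s^3) ≤ 3*M*(r^2 - s^2) := by nlinarith [e1, e2]
  have h0 : 0 ≤ 2*(r^3 - s^3) := by linarith
  nlinarith [mul_self_le_mul_self h0 h1]

lemma sup6 (a₃ : ℝ) (h₃ : 0 < a₃) (N : ℝ) (hN : 0 ≤ N) :
    8*N^2 - 0.5*a₃*N^6 ≤ sSup {v : ℝ | ∃ u : ℝ, 0 ≤ u ∧ v = 8 * u ^ ((2:ℝ)/3) - 0.5 * a₃ * u ^ 2} := by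
  apply le_csSup
  · refine ⟨8 + 32/a₃, ?_⟩
    rintro v ⟨u, hu, rfl⟩
    have h23 : u ^ ((2:ℝ)/3) ≤ 1 + u := by
      rcases le_total u 1 with h|h
      · have := Real.rpow_le_one hu h (by norm_num : (0:ℝ) ≤ 2/3)
        linarith
      · have h2 := Real.rpow_le_rpow_of_exponent_le h (by norm_num : (2:ℝ)/3 ≤ 1)
        rw [Real.rpow_one] at h2; linarith
    have hdiv : 8*u - 0.5*a₃*u^2 ≤ 32/a₃ := by
      rw [le_div_iff₀ h₃]; nlinarith [sq_nonneg (a₃*u - 8)]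
    linarith
  · refine ⟨N^3, pow_nonneg hN 3, ?_⟩
    have : ((N^3 : ℝ)) ^ ((2:ℝ)/3) = N^2 := by
      rw [← Real.rpow_natCast N 3, ← Real.rpow_mul hN, ← Real.rpow_natCast N 2]; norm_num
    rw [this]; ring

lemma sup8 (a₃ a₄ : ℝ) (h₃ : 0 < a₃) (M : ℝ) :
    9*a₄^2*M^2 - 0.25*a₃*M^4 ≤ sSup {v : ℝ | ∃ u : ℝ, 0 ≤ u ∧ v = 9 * a₄ ^ 2 * u - 0.25 * a₃ * u ^ 2} := by
  apply le_csSup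
  · refine ⟨81*a₄^4/a₃, ?_⟩
    rintro v ⟨u, hu, rfl⟩
    rw [le_div_iff₀ h₃]; nlinarith [sq_nonneg (a₃*u - 18*a₄^2)]
  · exact ⟨M^2, sq_nonneg M, by ring⟩

lemma pow4_third (a : ℝ) (ha : 0 ≤ a) : a ^ ((4:ℝ)/3) = (a ^ ((1:ℝ)/3)) ^ (4:ℕ) := by
  rw [← Real.rpow_natCast (a ^ ((1:ℝ)/3)) 4, ← Real.rpow_mul ha]; norm_num

lemma cube_third (a : ℝ) (ha : 0 ≤ a) : (a ^ ((1:ℝ)/3)) ^ (3:ℕ) = a := by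
  rw [← Real.rpow_natCast (a ^ ((1:ℝ)/3)) 3, ← Real.rpow_mul ha]; norm_num

lemma pow3_half (a : ℝ) (ha : 0 ≤ a) : a ^ ((3:ℝ)/2) = (a ^ ((1:ℝ)/2)) ^ (3:ℕ) := by
  rw [← Real.rpow_natCast (a ^ ((1:ℝ)/2)) 3, ← Real.rpow_mul ha]; norm_num

lemma sq_half (a : ℝ) (ha : 0 ≤ a) : (a ^ ((1:ℝ)/2)) ^ (2:ℕ) = a := by
  rw [← Real.rpow_natCast (a ^ ((1:ℝ)/2)) 2, ← Real.rpow_mul ha]; norm_num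


lemma stepT1 (a₂ x xb y yb p q N : ℝ)
    (hkey4 : 9*(p^4 - q^4)^2 ≤ 16*N^2*(p^3 - q^3)^2)
    (hyy : (p^3 - q^3)^2 ≤ (y - yb)^2) :
    a₂*(x-xb)*(p^4 - q^4) ≤ 0.5*a₂^2*(x-xb)^2 + (8/9)*(N^2*(y-yb)^2) := by
  nlinarith [sq_nonneg (a₂*(x-xb) - (p^4 - q^4)), hkey4,
    mul_le_mul_of_nonneg_left hyy (sq_nonneg N)]

lemma stepT2 (a₃ x xb : ℝ) (h₃ : 0 < a₃) :
    a₃*(0.5*(x-xb)^2*(x^2+xb^2)) ≤ a₃*((x-xb)*(x^3-xb^3)) := by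
  apply mul_le_mul_of_nonneg_left _ h₃.le
  nlinarith [sq_nonneg ((x-xb)*(x+xb))]

lemma stepT3 (a₄ a₅ y yb r s : ℝ) :
    ((a₄*r^3 + a₅*y) - (a₄*s^3 + a₅*yb))^2
      ≤ 2*a₄^2*(r^3-s^3)^2 + 2*a₅^2*(y-yb)^2 := by
  nlinarith [sq_nonneg (a₄*(r^3-s^3) - a₅*(y-yb))]

lemma stepT4 (a₄ x xb r s M : ℝ)
    (hkey3 : 4*(r^3 - s^3)^2 ≤ 9*M^2*(r^2 - s^2)^2)
    (hxx : (r^2 - s^2)^2 ≤ (x - xb)^2) :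
    2*a₄^2*(r^3-s^3)^2 ≤ (9/2)*(a₄^2*(M^2*(x-xb)^2)) := by
  nlinarith [mul_le_mul_of_nonneg_left hkey3 (sq_nonneg a₄),
    mul_le_mul_of_nonneg_left (mul_le_mul_of_nonneg_left hxx (sq_nonneg M)) (sq_nonneg a₄)]

lemma stepS1 (a₃ a₆ y yb N : ℝ) (h₃ : 0 < a₃)
    (ha6N : 8*N^2 - 0.5*a₃*N^6 ≤ a₆) (hN6 : N^6 ≤ y^2 + yb^2) :
    (8/9)*(N^2*(y-yb)^2)
      ≤ (1/9)*(a₆*(y-yb)^2) + (1/18)*(a₃*(y^2+yb^2)*(y-yb)^2) := by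
  have u1 := mul_le_mul_of_nonneg_right ha6N (sq_nonneg (y - yb))
  have u2 := mul_le_mul_of_nonneg_right (mul_le_mul_of_nonneg_left hN6 h₃.le) (sq_nonneg (y - yb))
  nlinarith [u1, u2]

lemma stepS2 (a₃ a₄ a₈ x xb M : ℝ) (h₃ : 0 < a₃)
    (ha8M : 9*a₄^2*M^2 - 0.25*a₃*M^4 ≤ a₈) (hM4 : M^4 ≤ x^2 + xb^2) :
    (9/2)*(a₄^2*(M^2*(x-xb)^2))
      ≤ (1/2)*(a₈*(x-xb)^2) + (1/8)*(a₃*(x^2+xb^2)*(x-xb)^2) := by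
  have u1 := mul_le_mul_of_nonneg_right ha8M (sq_nonneg (x - xb))
  have u2 := mul_le_mul_of_nonneg_right (mul_le_mul_of_nonneg_left hM4 h₃.le) (sq_nonneg (x - xb))
  nlinarith [u1, u2]

set_option maxHeartbeats 2000000 in
lemma finalComb (a₁ a₂ a₃ a₄ a₅ a₆ a₈ x xb y yb p q r s N M A B : ℝ)
    (T1 : a₂*(x-xb)*(p^4 - q^4) ≤ 0.5*a₂^2*(x-xb)^2 + (8/9)*(N^2*(y-yb)^2))
    (T2 : a₃*(0.5*(x-xb)^2*(x^2+xb^2)) ≤ a₃*((x-xb)*(x^3-xb^3)))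
    (T3 : ((a₄*r^3 + a₅*y) - (a₄*s^3 + a₅*yb))^2
      ≤ 2*a₄^2*(r^3-s^3)^2 + 2*a₅^2*(y-yb)^2)
    (T4 : 2*a₄^2*(r^3-s^3)^2 ≤ (9/2)*(a₄^2*(M^2*(x-xb)^2)))
    (S1 : (8/9)*(N^2*(y-yb)^2)
      ≤ (1/9)*(a₆*(y-yb)^2) + (1/18)*(a₃*(y^2+yb^2)*(y-yb)^2))
    (S2 : (9/2)*(a₄^2*(M^2*(x-xb)^2))
      ≤ (1/2)*(a₈*(x-xb)^2) + (1/8)*(a₃*(x^2+xb^2)*(x-xb)^2))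
    (hm1 : a₂^2*(x-xb)^2 ≤ A * (x-xb)^2)
    (hm2 : a₆*(y-yb)^2 ≤ A * (y-yb)^2)
    (hm3 : a₈*(x-xb)^2 ≤ B * (x-xb)^2)
    (hm4 : a₅^2*(y-yb)^2 ≤ B * (y-yb)^2)
    (hmA0 : 0 ≤ A * (x-xb)^2) (hmA1 : 0 ≤ A * (y-yb)^2)
    (hmB0 : 0 ≤ B * (x-xb)^2) (hmB1 : 0 ≤ B * (y-yb)^2)
    (hx2 : 0 ≤ a₃*(x^2+xb^2)*(x-xb)^2)
    (hy2 : 0 ≤ a₃*(y^2+yb^2)*(y-yb)^2) :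
    (x - xb) * ((a₁ + a₂ * p^4 - a₃ * x ^ 3) - (a₁ + a₂ * q^4 - a₃ * xb ^ 3))
        + ((a₄ * r^3 + a₅ * y) - (a₄ * s^3 + a₅ * yb)) ^ 2
      ≤ (A + 2 * B) * ((x - xb) ^ 2 + (y - yb) ^ 2)
        - 0.25 * a₃ * (x - xb) ^ 2 * (x ^ 2 + xb ^ 2)
        + 0.25 * a₃ * (y - yb) ^ 2 * (y ^ 2 + yb ^ 2) := by
  linarith [T1, T2, T3, T4, S1, S2, hm1, hm2, hm3, hm4, hmA0, hmA1, hmB0, hmB1, hx2, hy2]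

set_option maxHeartbeats 2000000 in
theorem stmt_19 (a₁ a₂ a₃ a₄ a₅ a₆ a₈ H₂ : ℝ) (h₃ : 0 < a₃)
    (ha₆ : a₆ = sSup {v : ℝ | ∃ u : ℝ, 0 ≤ u ∧ v = 8 * u ^ ((2:ℝ)/3) - 0.5 * a₃ * u ^ 2})
    (ha₈ : a₈ = sSup {v : ℝ | ∃ u : ℝ, 0 ≤ u ∧ v = 9 * a₄ ^ 2 * u - 0.25 * a₃ * u ^ 2})
    (hH₂ : H₂ = max a₆ (a₂ ^ 2) + 2 * max a₈ (a₅ ^ 2))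
    (U : ℝ → ℝ → ℝ)
    (hU : ∀ x xb : ℝ, U x xb = 0.25 * a₃ * |x - xb| ^ 2 * (x ^ 2 + xb ^ 2)) :
    ∀ x xb y yb : ℝ,
      (x - xb) * ((a₁ + a₂ * |y| ^ ((4:ℝ)/3) - a₃ * x ^ 3)
          - (a₁ + a₂ * |yb| ^ ((4:ℝ)/3) - a₃ * xb ^ 3))
        + ((a₄ * |x| ^ ((3:ℝ)/2) + a₅ * y) - (a₄ * |xb| ^ ((3:ℝ)/2) + a₅ * yb)) ^ 2
        ≤ H₂ * (|x - xb| ^ 2 + |y - yb| ^ 2) - U x xb + U y yb := by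
  subst hH₂
  intro x xb y yb
  rw [hU, hU, pow4_third _ (abs_nonneg y), pow4_third _ (abs_nonneg yb),
    pow3_half _ (abs_nonneg x), pow3_half _ (abs_nonneg xb), sq_abs, sq_abs]
  set p := |y| ^ ((1:ℝ)/3) with hpdef
  set q := |yb| ^ ((1:ℝ)/3) with hqdef
  set r := |x| ^ ((1:ℝ)/2) with hrdef
  set s := |xb| ^ ((1:ℝ)/2) with hsdef
  have hp0 : 0 ≤ p := Real.rpow_nonneg (abs_nonneg _) _
  have hq0 : 0 ≤ q := Real.rpow_nonneg (abs_nonneg _) _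
  have hr0 : 0 ≤ r := Real.rpow_nonneg (abs_nonneg _) _
  have hs0 : 0 ≤ s := Real.rpow_nonneg (abs_nonneg _) _
  have hp3 : p ^ 3 = |y| := cube_third _ (abs_nonneg y)
  have hq3 : q ^ 3 = |yb| := cube_third _ (abs_nonneg yb)
  have hr2 : r ^ 2 = |x| := sq_half _ (abs_nonneg x)
  have hs2 : s ^ 2 = |xb| := sq_half _ (abs_nonneg xb)
  have hp6 : p ^ 6 = y ^ 2 := by rw [show p^6 = (p^3)^2 by ring, hp3, sq_abs]
  have hq6 : q ^ 6 = yb ^ 2 := by rw [show q^6 = (q^3)^2 by ring, hq3, sq_abs]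
  have hr4 : r ^ 4 = x ^ 2 := by rw [show r^4 = (r^2)^2 by ring, hr2, sq_abs]
  have hs4 : s ^ 4 = xb ^ 2 := by rw [show s^4 = (s^2)^2 by ring, hs2, sq_abs]
  set N := max p q with hNdef
  set M := max r s with hMdef
  have hN0 : 0 ≤ N := le_trans hp0 (le_max_left _ _)
  have hM0 : 0 ≤ M := le_trans hr0 (le_max_left _ _)
  have hN6 : N ^ 6 ≤ y ^ 2 + yb ^ 2 := by
    rcases le_total p q with h|h
    · rw [hNdef, max_eq_right h, hq6]; nlinarith [sq_nonneg y]
    · rw [hNdef, max_eq_left h, hp6]; nlinarith [sq_nonneg yb]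
  have hM4 : M ^ 4 ≤ x ^ 2 + xb ^ 2 := by
    rcases le_total r s with h|h
    · rw [hMdef, max_eq_right h, hs4]; nlinarith [sq_nonneg x]
    · rw [hMdef, max_eq_left h, hr4]; nlinarith [sq_nonneg xb]
  -- sup bounds
  have ha6N : 8*N^2 - 0.5*a₃*N^6 ≤ a₆ := by rw [ha₆]; exact sup6 a₃ h₃ N hN0
  have ha60 : 0 ≤ a₆ := by
    have h := sup6 a₃ h₃ 0 le_rfl
    rw [← ha₆] at h; norm_num at h; linarith
  have ha8M : 9*a₄^2*M^2 - 0.25*a₃*M^4 ≤ a₈ := by rw [ha₈]; exact sup8 a₃ a₄ h₃ M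
  have ha80 : 0 ≤ a₈ := by
    have h := sup8 a₃ a₄ h₃ 0
    rw [← ha₈] at h; norm_num at h; linarith
  -- difference bounds in p,q,r,s
  have hkey4 : 9*(p^4 - q^4)^2 ≤ 16*N^2*(p^3 - q^3)^2 := by
    rcases le_total q p with h|h
    · exact key4' p q N hq0 h (le_max_left _ _)
    · have := key4' q p N hp0 h (le_max_right _ _); nlinarith [this]
  have hkey3 : 4*(r^3 - s^3)^2 ≤ 9*M^2*(r^2 - s^2)^2 := by
    rcases le_total s r with h|h
    · exact key3' r s M hs0 h (le_max_left _ _)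
    · have := key3' s r M hr0 h (le_max_right _ _); nlinarith [this]
  have hyy : (p^3 - q^3)^2 ≤ (y - yb)^2 := by
    rw [hp3, hq3]
    have h1 : |y| - |yb| ≤ |y - yb| := abs_sub_abs_le_abs_sub y yb
    have h2 : |yb| - |y| ≤ |y - yb| := by
      simpa [abs_sub_comm] using abs_sub_abs_le_abs_sub yb y
    calc (|y| - |yb|)^2 ≤ |y - yb|^2 := sq_le_sq' (by linarith) h1
    _ = (y - yb)^2 := sq_abs _
  have hxx : (r^2 - s^2)^2 ≤ (x - xb)^2 := by
    rw [hr2, hs2]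
    have h1 : |x| - |xb| ≤ |x - xb| := abs_sub_abs_le_abs_sub x xb
    have h2 : |xb| - |x| ≤ |x - xb| := by
      simpa [abs_sub_comm] using abs_sub_abs_le_abs_sub xb x
    calc (|x| - |xb|)^2 ≤ |x - xb|^2 := sq_le_sq' (by linarith) h1
    _ = (x - xb)^2 := sq_abs _
  have T1 := stepT1 a₂ x xb y yb p q N hkey4 hyy
  have T2 := stepT2 a₃ x xb h₃
  have T3 := stepT3 a₄ a₅ y yb r s
  have T4 := stepT4 a₄ x xb r s M hkey3 hxx
  have S1 := stepS1 a₃ a₆ y yb N h₃ ha6N hN6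
  have S2 := stepS2 a₃ a₄ a₈ x xb M h₃ ha8M hM4
  have hm1 : a₂^2*(x-xb)^2 ≤ max a₆ (a₂^2) * (x-xb)^2 :=
    mul_le_mul_of_nonneg_right (le_max_right _ _) (sq_nonneg _)
  have hm2 : a₆*(y-yb)^2 ≤ max a₆ (a₂^2) * (y-yb)^2 :=
    mul_le_mul_of_nonneg_right (le_max_left _ _) (sq_nonneg _)
  have hm3 : a₈*(x-xb)^2 ≤ max a₈ (a₅^2) * (x-xb)^2 :=
    mul_le_mul_of_nonneg_right (le_max_left _ _) (sq_nonneg _)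
  have hm4 : a₅^2*(y-yb)^2 ≤ max a₈ (a₅^2) * (y-yb)^2 :=
    mul_le_mul_of_nonneg_right (le_max_right _ _) (sq_nonneg _)
  have hmA0 : 0 ≤ max a₆ (a₂^2) * (x-xb)^2 :=
    mul_nonneg (le_trans ha60 (le_max_left _ _)) (sq_nonneg _)
  have hmA1 : 0 ≤ max a₆ (a₂^2) * (y-yb)^2 :=
    mul_nonneg (le_trans ha60 (le_max_left _ _)) (sq_nonneg _)
  have hmB0 : 0 ≤ max a₈ (a₅^2) * (x-xb)^2 :=
    mul_nonneg (le_trans ha80 (le_max_left _ _)) (sq_nonneg _)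
  have hmB1 : 0 ≤ max a₈ (a₅^2) * (y-yb)^2 :=
    mul_nonneg (le_trans ha80 (le_max_left _ _)) (sq_nonneg _)
  have hx2 : 0 ≤ a₃*(x^2+xb^2)*(x-xb)^2 :=
    mul_nonneg (mul_nonneg h₃.le (by positivity)) (sq_nonneg _)
  have hy2 : 0 ≤ a₃*(y^2+yb^2)*(y-yb)^2 :=
    mul_nonneg (mul_nonneg h₃.le (by positivity)) (sq_nonneg _)
  exact finalComb a₁ a₂ a₃ a₄ a₅ a₆ a₈ x xb y yb p q r s N M
    (max a₆ (a₂^2)) (max a₈ (a₅^2)) T1 T2 T3 T4 S1 S2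
    hm1 hm2 hm3 hm4 hmA0 hmA1 hmB0 hmB1 hx2 hy2
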